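/- Suppose m ≥ 5. Then every element x ∈ X is contained in exactly r_5 = (2^m − 4)(2^m − 8)(2^m − 16)/4! blocks of W_5, and the total number of blocks is |W_5| = (2^m − 2)(2^m − 4)(2^m − 8)(2^m − 16)/5!. -/

import Mathlib

open scoped Classical

set_option linter.unusedSectionVars false
set_option maxHeartbeats 1000000

noncomputable section

namespace W5aux

section CharTwoField

variable {F : Type*} [Field F] [CharP F 2]

lemma htwo : (2:F) = 0 := CharTwo.two_eq_zero

def Hnext (H : Finset F) (c : F) : Finset F := H ∪ H.image (c + ·)

def IsClosed (H : Finset F) : Prop := ∀ a ∈ H, ∀ b ∈ H, a + b ∈ H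

lemma isClosed_Hnext {H : Finset F} (hH : IsClosed H) (c : F) : IsClosed (Hnext H c) := by
  intro a ha b hb
  simp only [Hnext, Finset.mem_union, Finset.mem_image] at ha hb ⊢
  rcases ha with ha | ⟨y, hy, rfl⟩ <;> rcases hb with hb | ⟨z, hz, rfl⟩
  · exact Or.inl (hH _ ha _ hb)
  · exact Or.inr ⟨a + z, hH _ ha _ hz, by ring⟩
  · exact Or.inr ⟨y + b, hH _ hy _ hb, by ring⟩
  · refine Or.inl ?_
    have h : c + y + (c + z) = y + z := by linear_combination c * (htwo (F := F))
    rw [h]; exact hH _ hy _ hz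

lemma card_Hnext {H : Finset F} (hH : IsClosed H) {c : F} (hc : c ∉ H) :
    (Hnext H c).card = 2 * H.card := by
  have hdisj : Disjoint H (H.image (c + ·)) := by
    rw [Finset.disjoint_left]
    rintro a ha hb
    simp only [Finset.mem_image] at hb
    obtain ⟨y, hy, rfl⟩ := hb
    apply hc
    have h : c = (c + y) + y := by linear_combination -y * (htwo (F := F))
    rw [h]; exact hH _ ha _ hy
  rw [Hnext, Finset.card_union_of_disjoint hdisj,
    Finset.card_image_of_injective _ (add_right_injective c)]
  ring

def H0 : Finset F := {0, 1}
def H1 (x : F) : Finset F := Hnext H0 x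
def H2 (x b : F) : Finset F := Hnext (H1 x) b
def H3 (x b c : F) : Finset F := Hnext (H2 x b) c

lemma isClosed_H0 : IsClosed (H0 : Finset F) := by
  have h11 : (1:F) + 1 = 0 := by linear_combination (htwo (F := F))
  intro a ha b hb
  simp only [H0, Finset.mem_insert, Finset.mem_singleton] at *
  rcases ha with rfl | rfl <;> rcases hb with rfl | rfl <;> simp [h11]

lemma H1_eq (x : F) : H1 x = ({0, 1, x, x + 1} : Finset F) := by
  ext a
  simp only [H1, Hnext, H0, Finset.image_insert, Finset.image_singleton, add_zero,
    Finset.mem_union, Finset.mem_insert, Finset.mem_singleton]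
  tauto

lemma H2_eq (x b : F) : H2 x b =
    ({0, 1, x, x + 1, b, b + 1, b + x, b + (x + 1)} : Finset F) := by
  ext a
  simp only [H2, Hnext, H1_eq, Finset.image_insert, Finset.image_singleton, add_zero,
    Finset.mem_union, Finset.mem_insert, Finset.mem_singleton]
  tauto

lemma H3_eq (x b c : F) : H3 x b c =
    ({0, 1, x, x + 1, b, b + 1, b + x, b + (x + 1), c, c + 1, c + x, c + (x + 1),
      c + b, c + (b + 1), c + (b + x), c + (b + (x + 1))} : Finset F) := by
  ext a
  simp only [H3, Hnext, H2_eq, Finset.image_insert, Finset.image_singleton, add_zero,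
    Finset.mem_union, Finset.mem_insert, Finset.mem_singleton]
  tauto

lemma card_H1 {x : F} (hx : x ∉ (H0 : Finset F)) : (H1 x).card = 4 := by
  have h0 : (H0 : Finset F).card = 2 := by
    rw [H0, Finset.card_insert_of_notMem (by simp), Finset.card_singleton]
  rw [H1, card_Hnext isClosed_H0 hx, h0]

lemma isClosed_H1 (x : F) : IsClosed (H1 x) := isClosed_Hnext isClosed_H0 x
lemma isClosed_H2 (x b : F) : IsClosed (H2 x b) := isClosed_Hnext (isClosed_H1 x) b

lemma card_H2 {x b : F} (hx : x ∉ (H0 : Finset F)) (hb : b ∉ H1 x) : (H2 x b).card = 8 := by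
  rw [H2, card_Hnext (isClosed_H1 x) hb, card_H1 hx]

lemma card_H3 {x b c : F} (hx : x ∉ (H0 : Finset F)) (hb : b ∉ H1 x) (hc : c ∉ H2 x b) :
    (H3 x b c).card = 16 := by
  rw [H3, card_Hnext (isClosed_H2 x b) hc, card_H2 hx hb]

end CharTwoField

lemma count_pair {α β : Type*} [Fintype α] [Fintype β] (P : α → Prop) (Q : α → β → Prop)
    [DecidablePred P] [∀ a, DecidablePred (Q a)]
    [DecidablePred (fun p : α × β => P p.1 ∧ Q p.1 p.2)] (n k : ℕ)
    (hP : (Finset.univ.filter P).card = n)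
    (hQ : ∀ a, P a → (Finset.univ.filter (Q a)).card = k) :
    (Finset.univ.filter (fun p : α × β => P p.1 ∧ Q p.1 p.2)).card = n * k := by
  have key : ∀ a ∈ Finset.univ.filter P,
      ((Finset.univ.filter fun p : α × β => P p.1 ∧ Q p.1 p.2).filter fun p => p.1 = a).card = k := by
    intro a ha
    simp only [Finset.mem_filter, Finset.mem_univ, true_and] at ha
    rw [← hQ a ha]
    rw [Finset.filter_filter]
    apply Finset.card_bij (fun p _ => p.2)
    · rintro ⟨a1, b1⟩ hp
      simp only [Finset.mem_filter, Finset.mem_univ, true_and] at hp ⊢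
      obtain ⟨⟨_, hq⟩, rfl⟩ := hp
      exact hq
    · rintro ⟨a1, b1⟩ h1 ⟨a2, b2⟩ h2 h
      simp only [Finset.mem_filter, Finset.mem_univ, true_and] at h1 h2
      simp only at h
      simp [Prod.ext_iff, h, h1.2, h2.2]
    · intro b hb
      simp only [Finset.mem_filter, Finset.mem_univ, true_and] at hb
      exact ⟨(a, b), by simp [ha, hb], rfl⟩
  rw [Finset.card_eq_sum_card_fiberwise (f := fun p : α × β => p.1) (t := Finset.univ.filter P)
      (fun p hp => by simp only [Finset.mem_coe, Finset.mem_filter, Finset.mem_univ, true_and] at hp ⊢; exact hp.1)]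
  rw [Finset.sum_congr rfl key, Finset.sum_const, hP, smul_eq_mul]

lemma card_filter_not_mem {α : Type*} [Fintype α] (s : Finset α) :
    (Finset.univ.filter (fun a => a ∉ s)).card = Fintype.card α - s.card := by
  have h : Finset.univ.filter (fun a => a ∉ s) = sᶜ := by ext a; simp
  rw [h, Finset.card_compl]

lemma card_triple_distinct {α : Type*} [Fintype α] (s : Finset α) :
    (Finset.univ.filter fun p : α × α × α => p.1 ∈ s ∧ ((p.2.1 ∈ s ∧ p.2.1 ≠ p.1) ∧
      (p.2.2 ∈ s ∧ p.2.2 ≠ p.1 ∧ p.2.2 ≠ p.2.1))).card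
      = s.card * ((s.card - 1) * (s.card - 2)) := by
  have h1 : (Finset.univ.filter (fun a => a ∈ s)).card = s.card := by
    simp [Finset.filter_univ_mem]
  have h2 : ∀ a, a ∈ s → (Finset.univ.filter
      (fun p : α × α => (p.1 ∈ s ∧ p.1 ≠ a) ∧ (p.2 ∈ s ∧ p.2 ≠ a ∧ p.2 ≠ p.1))).card
      = (s.card - 1) * (s.card - 2) := by
    intro a ha
    have h3 : (Finset.univ.filter (fun v => v ∈ s ∧ v ≠ a)).card = s.card - 1 := by
      have h : Finset.univ.filter (fun v => v ∈ s ∧ v ≠ a) = s.erase a := by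
        ext v; simp [Finset.mem_erase, and_comm]
      rw [h, Finset.card_erase_of_mem ha]
    have h4 : ∀ b : α, b ∈ s ∧ b ≠ a → (Finset.univ.filter
        (fun v => v ∈ s ∧ v ≠ a ∧ v ≠ b)).card = s.card - 2 := by
      rintro b ⟨hb, hba⟩
      have h : Finset.univ.filter (fun v => v ∈ s ∧ v ≠ a ∧ v ≠ b) = (s.erase a).erase b := by
        ext v; simp only [Finset.mem_filter, Finset.mem_univ, true_and, Finset.mem_erase]
        tauto
      rw [h, Finset.card_erase_of_mem (Finset.mem_erase.mpr ⟨hba, hb⟩),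
        Finset.card_erase_of_mem ha]
      omega
    exact count_pair (fun v => v ∈ s ∧ v ≠ a) (fun b v => v ∈ s ∧ v ≠ a ∧ v ≠ b) _ _ h3 h4
  exact count_pair (β := α × α) (fun a => a ∈ s)
    (fun (a : α) (p : α × α) => (p.1 ∈ s ∧ p.1 ≠ a) ∧ (p.2 ∈ s ∧ p.2 ≠ a ∧ p.2 ≠ p.1)) _ _ h1 h2

section Main

variable {F : Type*} [Field F] [CharP F 2]

def inW5 (B : Finset F) : Prop :=
  (∀ y ∈ B, y ≠ 0 ∧ y ≠ 1) ∧ B.card = 5 ∧ B.sum id = 1 ∧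
    ∀ a ∈ B, ∀ b ∈ B, a ≠ b → a + b ≠ 1

def fmap (x : F) (p : F × F × F) : Finset F :=
  insert x (insert p.1 (insert p.2.1 (insert p.2.2 {1 + x + p.1 + p.2.1 + p.2.2})))

lemma step1 {x b c d : F} (hx0 : x ≠ 0) (hx1 : x ≠ 1)
    (hb : b ∉ H1 x) (hc : c ∉ H2 x b) (hd : d ∉ H3 x b c) :
    inW5 (fmap x (b, c, d)) ∧ x ∈ fmap x (b, c, d) := by
  rw [H1_eq] at hb; rw [H2_eq] at hc; rw [H3_eq] at hd
  simp only [Finset.mem_insert, Finset.mem_singleton, not_or] at hb hc hd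
  obtain ⟨hb0, hb1, hbx, hbx1⟩ := hb
  obtain ⟨hc0, hc1, hcx, hcx1, hcb, hcb1, hcbx, hcbx1⟩ := hc
  obtain ⟨hd0, hd1, hdx, hdx1, hdb, hdb1, hdbx, hdbx1, hdc, hdc1, hdcx, hdcx1,
    hdcb, hdcb1, hdcbx, hdcbx1⟩ := hd
  set e : F := 1 + x + b + c + d with he
  have hfm : fmap x (b, c, d) = insert x (insert b (insert c (insert d {e}))) := by
    rw [he]; rfl
  have hex : e ≠ x := fun h => hdcb1 (by linear_combination h - (1+b+c) * (htwo (F := F)))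
  have heb : e ≠ b := fun h => hdcx1 (by linear_combination h - (1+x+c) * (htwo (F := F)))
  have hec : e ≠ c := fun h => hdbx1 (by linear_combination h - (1+x+b) * (htwo (F := F)))
  have hed : e ≠ d := fun h => hcbx1 (by linear_combination h - (1+x+b) * (htwo (F := F)))
  have he0 : e ≠ 0 := fun h => hdcbx1 (by linear_combination h - (1+x+b+c) * (htwo (F := F)))
  have he1 : e ≠ 1 := fun h => hdcbx (by linear_combination h - (x+b+c) * (htwo (F := F)))
  have hpxb : x + b ≠ 1 := fun h => hbx1 (by linear_combination h - x * (htwo (F := F)))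
  have hpxc : x + c ≠ 1 := fun h => hcx1 (by linear_combination h - x * (htwo (F := F)))
  have hpxd : x + d ≠ 1 := fun h => hdx1 (by linear_combination h - x * (htwo (F := F)))
  have hpbc : b + c ≠ 1 := fun h => hcb1 (by linear_combination h - b * (htwo (F := F)))
  have hpbd : b + d ≠ 1 := fun h => hdb1 (by linear_combination h - b * (htwo (F := F)))
  have hpcd : c + d ≠ 1 := fun h => hdc1 (by linear_combination h - c * (htwo (F := F)))
  have hpxe : x + e ≠ 1 := fun h => hdcb (by linear_combination h - (x+b+c) * (htwo (F := F)))
  have hpbe : b + e ≠ 1 := fun h => hdcx (by linear_combination h - (b+c+x) * (htwo (F := F)))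
  have hpce : c + e ≠ 1 := fun h => hdbx (by linear_combination h - (b+x+c) * (htwo (F := F)))
  have hpde : d + e ≠ 1 := fun h => hcbx (by linear_combination h - (x+b+d) * (htwo (F := F)))
  have hpbx : b + x ≠ 1 := by rw [add_comm]; exact hpxb
  have hpcx : c + x ≠ 1 := by rw [add_comm]; exact hpxc
  have hpdx : d + x ≠ 1 := by rw [add_comm]; exact hpxd
  have hpcb : c + b ≠ 1 := by rw [add_comm]; exact hpbc
  have hpdb : d + b ≠ 1 := by rw [add_comm]; exact hpbd
  have hpdc : d + c ≠ 1 := by rw [add_comm]; exact hpcd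
  have hpex : e + x ≠ 1 := by rw [add_comm]; exact hpxe
  have hpeb : e + b ≠ 1 := by rw [add_comm]; exact hpbe
  have hpec : e + c ≠ 1 := by rw [add_comm]; exact hpce
  have hped : e + d ≠ 1 := by rw [add_comm]; exact hpde
  rw [hfm]
  have hdnm : d ∉ ({e} : Finset F) := by
    simp only [Finset.mem_singleton]; exact Ne.symm hed
  have hcnm : c ∉ insert d ({e} : Finset F) := by
    simp only [Finset.mem_insert, Finset.mem_singleton, not_or]
    exact ⟨Ne.symm hdc, Ne.symm hec⟩
  have hbnm : b ∉ insert c (insert d ({e} : Finset F)) := by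
    simp only [Finset.mem_insert, Finset.mem_singleton, not_or]
    exact ⟨Ne.symm hcb, Ne.symm hdb, Ne.symm heb⟩
  have hxnm : x ∉ insert b (insert c (insert d ({e} : Finset F))) := by
    simp only [Finset.mem_insert, Finset.mem_singleton, not_or]
    exact ⟨Ne.symm hbx, Ne.symm hcx, Ne.symm hdx, Ne.symm hex⟩
  refine ⟨⟨?_, ?_, ?_, ?_⟩, by simp⟩
  · intro y hy
    simp only [Finset.mem_insert, Finset.mem_singleton] at hy
    rcases hy with rfl | rfl | rfl | rfl | rfl
    exacts [⟨hx0, hx1⟩, ⟨hb0, hb1⟩, ⟨hc0, hc1⟩, ⟨hd0, hd1⟩, ⟨he0, he1⟩]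
  · rw [Finset.card_insert_of_notMem hxnm, Finset.card_insert_of_notMem hbnm,
      Finset.card_insert_of_notMem hcnm, Finset.card_insert_of_notMem hdnm,
      Finset.card_singleton]
  · rw [Finset.sum_insert hxnm, Finset.sum_insert hbnm, Finset.sum_insert hcnm,
      Finset.sum_insert hdnm, Finset.sum_singleton]
    simp only [id]
    linear_combination he + (x+b+c+d) * (htwo (F := F))
  · intro a ha a' ha' hne
    simp only [Finset.mem_insert, Finset.mem_singleton] at ha ha'
    rcases ha with rfl | rfl | rfl | rfl | rfl <;>
      rcases ha' with rfl | rfl | rfl | rfl | rfl <;>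
      first | exact absurd rfl hne | assumption

lemma step2 {x : F} {B : Finset F} (hB : inW5 B) (hxB : x ∈ B) (b c d : F) :
    ((b ∉ H1 x ∧ (c ∉ H2 x b ∧ d ∉ H3 x b c)) ∧ fmap x (b, c, d) = B) ↔
    (b ∈ B.erase x ∧ ((c ∈ B.erase x ∧ c ≠ b) ∧ (d ∈ B.erase x ∧ d ≠ b ∧ d ≠ c))) := by
  obtain ⟨hX, hcard, hsum0, hpair⟩ := hB
  constructor
  · rintro ⟨⟨hb, hc, hd⟩, hf⟩
    rw [H1_eq] at hb; rw [H2_eq] at hc; rw [H3_eq] at hd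
    simp only [Finset.mem_insert, Finset.mem_singleton, not_or] at hb hc hd
    obtain ⟨hb0, hb1, hbx, hbx1⟩ := hb
    obtain ⟨hc0, hc1, hcx, hcx1, hcb, _⟩ := hc
    obtain ⟨hd0, hd1, hdx, hdx1, hdb, hdb1, hdbx, hdbx1, hdc, _⟩ := hd
    have hbB : b ∈ B := by rw [← hf]; simp [fmap]
    have hcB : c ∈ B := by rw [← hf]; simp [fmap]
    have hdB : d ∈ B := by rw [← hf]; simp [fmap]
    exact ⟨Finset.mem_erase.mpr ⟨hbx, hbB⟩,
      ⟨Finset.mem_erase.mpr ⟨hcx, hcB⟩, hcb⟩,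
      Finset.mem_erase.mpr ⟨hdx, hdB⟩, hdb, hdc⟩
  · rintro ⟨hbm, ⟨hcm, hcb⟩, hdm, hdb, hdc⟩
    obtain ⟨hbx, hbB⟩ := Finset.mem_erase.mp hbm
    obtain ⟨hcx, hcB⟩ := Finset.mem_erase.mp hcm
    obtain ⟨hdx, hdB⟩ := Finset.mem_erase.mp hdm
    have hdmem : d ∈ ((B.erase x).erase b).erase c :=
      Finset.mem_erase.mpr ⟨hdc, Finset.mem_erase.mpr ⟨hdb, hdm⟩⟩
    have hcmem : c ∈ (B.erase x).erase b := Finset.mem_erase.mpr ⟨hcb, hcm⟩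
    have hcard1 : ((((B.erase x).erase b).erase c).erase d).card = 1 := by
      rw [Finset.card_erase_of_mem hdmem, Finset.card_erase_of_mem hcmem,
        Finset.card_erase_of_mem hbm, Finset.card_erase_of_mem hxB, hcard]
    obtain ⟨e, hes⟩ := Finset.card_eq_one.mp hcard1
    have hemem : e ∈ (((B.erase x).erase b).erase c).erase d := by
      rw [hes]; exact Finset.mem_singleton_self e
    obtain ⟨hed, hemem2⟩ := Finset.mem_erase.mp hemem
    obtain ⟨hec, hemem3⟩ := Finset.mem_erase.mp hemem2
    obtain ⟨heb, hemem4⟩ := Finset.mem_erase.mp hemem3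
    obtain ⟨hex, heB⟩ := Finset.mem_erase.mp hemem4
    have e1 : insert d ((((B.erase x).erase b).erase c).erase d) =
        ((B.erase x).erase b).erase c := Finset.insert_erase hdmem
    have e2 : insert c (((B.erase x).erase b).erase c) = (B.erase x).erase b :=
      Finset.insert_erase hcmem
    have e3 : insert b ((B.erase x).erase b) = B.erase x := Finset.insert_erase hbm
    have e4 : insert x (B.erase x) = B := Finset.insert_erase hxB
    have hBrep : B = insert x (insert b (insert c (insert d ({e} : Finset F)))) := by
      rw [← hes, e1, e2, e3, e4]
    have hdnm : d ∉ ({e} : Finset F) := by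
      simp only [Finset.mem_singleton]; exact fun h => hed h.symm
    have hcnm : c ∉ insert d ({e} : Finset F) := by
      simp only [Finset.mem_insert, Finset.mem_singleton, not_or]
      exact ⟨fun h => hdc h.symm, fun h => hec h.symm⟩
    have hbnm : b ∉ insert c (insert d ({e} : Finset F)) := by
      simp only [Finset.mem_insert, Finset.mem_singleton, not_or]
      exact ⟨fun h => hcb h.symm, fun h => hdb h.symm, fun h => heb h.symm⟩
    have hxnm : x ∉ insert b (insert c (insert d ({e} : Finset F))) := by
      simp only [Finset.mem_insert, Finset.mem_singleton, not_or]
      exact ⟨fun h => hbx h.symm, fun h => hcx h.symm, fun h => hdx h.symm,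
        fun h => hex h.symm⟩
    have hsum : x + (b + (c + (d + e))) = 1 := by
      have h := hsum0
      rw [hBrep, Finset.sum_insert hxnm, Finset.sum_insert hbnm, Finset.sum_insert hcnm,
        Finset.sum_insert hdnm, Finset.sum_singleton] at h
      simpa [id] using h
    have h2 := htwo (F := F)
    refine ⟨⟨?_, ?_, ?_⟩, ?_⟩
    · rw [H1_eq]
      simp only [Finset.mem_insert, Finset.mem_singleton, not_or]
      exact ⟨(hX b hbB).1, (hX b hbB).2, hbx, fun h =>
        hpair x hxB b hbB (fun h' => hbx h'.symm) (by linear_combination h + x * h2)⟩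
    · rw [H2_eq]
      simp only [Finset.mem_insert, Finset.mem_singleton, not_or]
      refine ⟨(hX c hcB).1, (hX c hcB).2, hcx, fun h =>
        hpair x hxB c hcB (fun h' => hcx h'.symm) (by linear_combination h + x * h2),
        hcb, fun h => hpair b hbB c hcB (fun h' => hcb h'.symm)
          (by linear_combination h + b * h2), ?_, ?_⟩
      · intro h
        exact hpair d hdB e heB (fun h' => hed h'.symm)
          (by linear_combination hsum - h - (x + b) * h2)
      · intro h
        exact hed (show d = e by linear_combination hsum - h - (x + b + e) * h2).symm
    · rw [H3_eq]
      simp only [Finset.mem_insert, Finset.mem_singleton, not_or]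
      refine ⟨(hX d hdB).1, (hX d hdB).2, hdx, fun h =>
        hpair x hxB d hdB (fun h' => hdx h'.symm) (by linear_combination h + x * h2),
        hdb, fun h => hpair b hbB d hdB (fun h' => hdb h'.symm)
          (by linear_combination h + b * h2), ?_, ?_,
        hdc, fun h => hpair c hcB d hdB (fun h' => hdc h'.symm)
          (by linear_combination h + c * h2), ?_, ?_, ?_, ?_, ?_, ?_⟩
      · intro h
        exact hpair c hcB e heB (fun h' => hec h'.symm)
          (by linear_combination hsum - h - (x + b) * h2)
      · intro h
        exact hec (show e = c by linear_combination hsum - h - (x + b + c) * h2)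
      · intro h
        exact hpair b hbB e heB (fun h' => heb h'.symm)
          (by linear_combination hsum - h - (x + c) * h2)
      · intro h
        exact heb (show e = b by linear_combination hsum - h - (x + c + b) * h2)
      · intro h
        exact hpair x hxB e heB (fun h' => hex h'.symm)
          (by linear_combination hsum - h - (b + c) * h2)
      · intro h
        exact hex (show e = x by linear_combination hsum - h - (x + b + c) * h2)
      · intro h
        exact (hX e heB).2 (show e = 1 by linear_combination hsum - h - (x + b + c) * h2)
      · intro h
        exact (hX e heB).1 (show e = 0 by linear_combination hsum - h - (x + b + c) * h2)
    · have hev : (1 : F) + x + b + c + d = e := by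
        linear_combination hsum + (1 - e) * h2
      rw [hBrep]
      show insert x (insert b (insert c (insert d ({1 + x + b + c + d} : Finset F)))) = _
      rw [hev]

variable [Fintype F]

def Tset (x : F) : Finset (F × F × F) :=
  Finset.univ.filter (fun p => p.1 ∉ H1 x ∧ (p.2.1 ∉ H2 x p.1 ∧ p.2.2 ∉ H3 x p.1 p.2.1))

def Wfin : Finset (Finset F) := Finset.univ.filter (fun B => inW5 B)

lemma card_Tset {x : F} (hx : x ∉ (H0 : Finset F)) :
    (Tset x).card =
      (Fintype.card F - 4) * ((Fintype.card F - 8) * (Fintype.card F - 16)) := by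
  have h1 : (Finset.univ.filter (fun b : F => b ∉ H1 x)).card = Fintype.card F - 4 := by
    rw [card_filter_not_mem, card_H1 hx]
  have h2 : ∀ b : F, b ∉ H1 x → (Finset.univ.filter
      (fun p : F × F => p.1 ∉ H2 x b ∧ p.2 ∉ H3 x b p.1)).card
      = (Fintype.card F - 8) * (Fintype.card F - 16) := by
    intro b hb
    have h3 : (Finset.univ.filter (fun c : F => c ∉ H2 x b)).card = Fintype.card F - 8 := by
      rw [card_filter_not_mem, card_H2 hx hb]
    have h4 : ∀ c : F, c ∉ H2 x b →
        (Finset.univ.filter (fun d : F => d ∉ H3 x b c)).card = Fintype.card F - 16 := by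
      intro c hc
      rw [card_filter_not_mem, card_H3 hx hb hc]
    exact count_pair (fun c : F => c ∉ H2 x b) (fun c d => d ∉ H3 x b c) _ _ h3 h4
  exact count_pair (β := F × F) (fun b : F => b ∉ H1 x)
    (fun (b : F) (p : F × F) => p.1 ∉ H2 x b ∧ p.2 ∉ H3 x b p.1) _ _ h1 h2

lemma rcount {x : F} (hx0 : x ≠ 0) (hx1 : x ≠ 1) :
    24 * ((Wfin (F := F)).filter (fun B => x ∈ B)).card
      = (Fintype.card F - 4) * ((Fintype.card F - 8) * (Fintype.card F - 16)) := by
  have hx : x ∉ (H0 : Finset F) := by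
    rw [H0]; simp only [Finset.mem_insert, Finset.mem_singleton, not_or]
    exact ⟨hx0, hx1⟩
  have hmaps : ∀ p ∈ Tset x, fmap x p ∈ (Wfin (F := F)).filter (fun B => x ∈ B) := by
    rintro ⟨b, c, d⟩ hp
    simp only [Tset, Finset.mem_filter, Finset.mem_univ, true_and] at hp
    obtain ⟨hb, hc, hd⟩ := hp
    obtain ⟨h5, hxm⟩ := step1 hx0 hx1 hb hc hd
    simp only [Wfin, Finset.mem_filter, Finset.mem_univ, true_and]
    exact ⟨h5, hxm⟩
  have hsplit := Finset.card_eq_sum_card_fiberwise hmaps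
  have hfib : ∀ B ∈ (Wfin (F := F)).filter (fun B => x ∈ B),
      ((Tset x).filter (fun p => fmap x p = B)).card = 24 := by
    intro B hBm
    simp only [Wfin, Finset.mem_filter, Finset.mem_univ, true_and] at hBm
    obtain ⟨hB, hxB⟩ := hBm
    have hcard4 : (B.erase x).card = 4 := by
      rw [Finset.card_erase_of_mem hxB, hB.2.1]
    have hfe : (Tset x).filter (fun p => fmap x p = B) =
        Finset.univ.filter (fun p : F × F × F => p.1 ∈ B.erase x ∧
          ((p.2.1 ∈ B.erase x ∧ p.2.1 ≠ p.1) ∧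
            (p.2.2 ∈ B.erase x ∧ p.2.2 ≠ p.1 ∧ p.2.2 ≠ p.2.1))) := by
      rw [Tset, Finset.filter_filter]
      apply Finset.filter_congr
      intro p _
      exact step2 hB hxB p.1 p.2.1 p.2.2
    rw [hfe, card_triple_distinct, hcard4]
  have hTcard := card_Tset (F := F) hx
  rw [hsplit, Finset.sum_congr rfl hfib, Finset.sum_const, smul_eq_mul] at hTcard
  rw [mul_comm]
  exact hTcard

lemma total :
    120 * (Wfin (F := F)).card = (Fintype.card F - 2) *
      ((Fintype.card F - 4) * ((Fintype.card F - 8) * (Fintype.card F - 16))) := by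
  set Xf : Finset F := Finset.univ.filter (fun y => y ≠ 0 ∧ y ≠ 1) with hXf
  have hXcard : Xf.card = Fintype.card F - 2 := by
    have h : Xf = ({0, 1} : Finset F)ᶜ := by
      ext y
      simp only [hXf, Finset.mem_filter, Finset.mem_univ, true_and, Finset.mem_compl,
        Finset.mem_insert, Finset.mem_singleton, not_or]
    rw [h, Finset.card_compl, Finset.card_insert_of_notMem (by simp), Finset.card_singleton]
  have key : ∑ B ∈ Wfin (F := F), B.card
      = ∑ y ∈ Xf, ((Wfin (F := F)).filter (fun B => y ∈ B)).card := by
    have h1 : ∀ B ∈ Wfin (F := F), B.card = (Xf.filter (fun y => y ∈ B)).card := by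
      intro B hBm
      simp only [Wfin, Finset.mem_filter, Finset.mem_univ, true_and] at hBm
      have h : Xf.filter (fun y => y ∈ B) = B := by
        ext y
        simp only [hXf, Finset.filter_filter, Finset.mem_filter, Finset.mem_univ, true_and]
        exact ⟨fun h => h.2, fun hy => ⟨hBm.1 y hy, hy⟩⟩
      rw [h]
    rw [Finset.sum_congr rfl h1]
    simp only [Finset.card_filter]
    exact Finset.sum_comm
  have hsum5 : ∑ B ∈ Wfin (F := F), B.card = 5 * (Wfin (F := F)).card := by
    rw [Finset.sum_congr rfl (fun B hB => ?_), Finset.sum_const, smul_eq_mul, mul_comm]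
    simp only [Wfin, Finset.mem_filter, Finset.mem_univ, true_and] at hB
    exact hB.2.1
  have hbig : 24 * ∑ y ∈ Xf, ((Wfin (F := F)).filter (fun B => y ∈ B)).card
      = Xf.card * ((Fintype.card F - 4) * ((Fintype.card F - 8) * (Fintype.card F - 16))) := by
    rw [Finset.mul_sum, Finset.sum_congr rfl (fun y hy => ?_), Finset.sum_const, smul_eq_mul]
    simp only [hXf, Finset.mem_filter, Finset.mem_univ, true_and] at hy
    exact rcount hy.1 hy.2
  calc 120 * (Wfin (F := F)).card = 24 * (5 * (Wfin (F := F)).card) := by ring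
    _ = 24 * ∑ B ∈ Wfin (F := F), B.card := by rw [hsum5]
    _ = 24 * ∑ y ∈ Xf, ((Wfin (F := F)).filter (fun B => y ∈ B)).card := by rw [key]
    _ = Xf.card * ((Fintype.card F - 4) * ((Fintype.card F - 8) * (Fintype.card F - 16))) :=
        hbig
    _ = _ := by rw [hXcard]

lemma inW5_iff (B : Finset F) :
    ((∀ y ∈ B, y ≠ 0 ∧ y ≠ 1) ∧ B.card = 5 ∧ B.sum id = 1 ∧
      ∀ I ⊆ B, I.Nonempty → I ≠ B → I.sum id ≠ 1) ↔ inW5 B := by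
  constructor
  · rintro ⟨hX, h5, hs, hI⟩
    refine ⟨hX, h5, hs, ?_⟩
    intro a ha b hb hab
    have hsub : ({a, b} : Finset F) ⊆ B := by
      intro y hy
      simp only [Finset.mem_insert, Finset.mem_singleton] at hy
      rcases hy with rfl | rfl <;> assumption
    have hcard2 : ({a, b} : Finset F).card = 2 := by
      rw [Finset.card_insert_of_notMem (by simp [hab]), Finset.card_singleton]
    have hne : ({a, b} : Finset F) ≠ B := by
      intro h
      rw [← h, hcard2] at h5
      exact absurd h5 (by norm_num)
    have h := hI {a, b} hsub ⟨a, by simp⟩ hne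
    rwa [Finset.sum_pair hab] at h
  · rintro ⟨hX, h5, hs, hp⟩
    refine ⟨hX, h5, hs, ?_⟩
    intro I hIB hne hneB hIs
    have hlt : I.card < 5 := by
      rw [← h5]
      exact Finset.card_lt_card (Finset.ssubset_iff_subset_ne.mpr ⟨hIB, hneB⟩)
    have hpos : 0 < I.card := Finset.card_pos.mpr hne
    have hJ : (B \ I).sum id + I.sum id = 1 := by rw [Finset.sum_sdiff hIB, hs]
    have hJcard : (B \ I).card = 5 - I.card := by rw [Finset.card_sdiff_of_subset hIB, h5]
    rw [hIs] at hJ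
    have hJ0 : (B \ I).sum id = 0 := by
      have h : (B \ I).sum id + 1 = 0 + 1 := by rw [hJ, zero_add]
      exact add_right_cancel h
    have hcases : I.card = 1 ∨ I.card = 2 ∨ I.card = 3 ∨ I.card = 4 := by omega
    rcases hcases with h1 | h2 | h3 | h4
    · obtain ⟨a, ha⟩ := Finset.card_eq_one.mp h1
      rw [ha, Finset.sum_singleton] at hIs
      have haB : a ∈ B := hIB (ha ▸ Finset.mem_singleton_self a)
      exact (hX a haB).2 hIs
    · obtain ⟨a, b, hab, hI2⟩ := Finset.card_eq_two.mp h2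
      rw [hI2, Finset.sum_pair hab] at hIs
      have haB : a ∈ B := hIB (hI2 ▸ Finset.mem_insert_self a {b})
      have hbB : b ∈ B := hIB (hI2 ▸ Finset.mem_insert_of_mem (Finset.mem_singleton_self b))
      exact hp a haB b hbB hab hIs
    · have hJ2 : (B \ I).card = 2 := by omega
      obtain ⟨a, b, hab, hJ2'⟩ := Finset.card_eq_two.mp hJ2
      rw [hJ2', Finset.sum_pair hab] at hJ0
      simp only [id_eq] at hJ0
      exact hab (by linear_combination hJ0 - b * (htwo (F := F)))
    · have hJ1 : (B \ I).card = 1 := by omega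
      obtain ⟨a, hJ1'⟩ := Finset.card_eq_one.mp hJ1
      rw [hJ1', Finset.sum_singleton] at hJ0
      have haB : a ∈ B := Finset.sdiff_subset (hJ1' ▸ Finset.mem_singleton_self a)
      exact (hX a haB).1 hJ0

end Main

end W5aux

end

noncomputable section

/-- `X = GF(2^m) \\ {0, 1}`. -/
def designX (m : ℕ) : Set (GaloisField 2 m) := {x | x ≠ 0 ∧ x ≠ 1}

/-- `W_k`: the collection of all `k`-element subsets `B` of `X` whose element-sum is `1`
and such that no nonempty proper subset of `B` has element-sum `1`. -/
def designW (m k : ℕ) : Set (Finset (GaloisField 2 m)) :=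
  {B | (B : Set (GaloisField 2 m)) ⊆ designX m ∧ B.card = k ∧ B.sum id = 1 ∧
    ∀ I ⊆ B, I.Nonempty → I ≠ B → I.sum id ≠ 1}

/-- For `m ≥ 5`, every `x ∈ X` lies in exactly `r_5` blocks of `W_5`, and the total
number of blocks is `|W_5| = b_5`. -/
theorem repetition_and_block_numbers_W5 (m : ℕ) (hm : 5 ≤ m) :
    (∀ x ∈ designX m, {B ∈ designW m 5 | x ∈ B}.ncard = (2 ^ m - 4) * (2 ^ m - 8) * (2 ^ m - 16) / Nat.factorial 4) ∧
    (designW m 5).ncard = (2 ^ m - 2) * (2 ^ m - 4) * (2 ^ m - 8) * (2 ^ m - 16) / Nat.factorial 5 := by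
  letI : Fintype (GaloisField 2 m) := Fintype.ofFinite _
  have hm0 : m ≠ 0 := by omega
  have hcard : Fintype.card (GaloisField 2 m) = 2 ^ m := by
    rw [← Nat.card_eq_fintype_card, GaloisField.card 2 m hm0]
  have hWeq : ∀ B : Finset (GaloisField 2 m), B ∈ designW m 5 ↔ W5aux.inW5 B := by
    intro B
    rw [← W5aux.inW5_iff]
    constructor
    · rintro ⟨hsub, h5, hs, hI⟩
      refine ⟨?_, h5, hs, hI⟩
      intro y hy
      exact hsub hy
    · rintro ⟨hX, h5, hs, hI⟩
      refine ⟨?_, h5, hs, hI⟩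
      intro y hy
      exact hX y hy
  have hset : designW m 5 = ↑(W5aux.Wfin (F := GaloisField 2 m)) := by
    ext B
    rw [Finset.mem_coe]
    simp only [W5aux.Wfin, Finset.mem_filter, Finset.mem_univ, true_and]
    exact hWeq B
  constructor
  · rintro x ⟨hx0, hx1⟩
    have h24 := W5aux.rcount (F := GaloisField 2 m) hx0 hx1
    rw [hcard] at h24
    have hseteq : {B ∈ designW m 5 | x ∈ B}
        = ↑((W5aux.Wfin (F := GaloisField 2 m)).filter (fun B => x ∈ B)) := by
      ext B
      simp only [Set.mem_setOf_eq, Finset.mem_coe, Finset.mem_filter, W5aux.Wfin,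
        Finset.mem_univ, true_and]
      exact and_congr_left' (hWeq B)
    rw [hseteq, Set.ncard_coe_finset]
    have hfac : Nat.factorial 4 = 24 := by norm_num [Nat.factorial]
    rw [hfac, mul_assoc, ← h24, Nat.mul_div_cancel_left _ (by norm_num : (0:ℕ) < 24)]
  · have h120 := W5aux.total (F := GaloisField 2 m)
    rw [hcard] at h120
    rw [hset, Set.ncard_coe_finset]
    have hfac : Nat.factorial 5 = 120 := by norm_num [Nat.factorial]
    rw [hfac, mul_assoc, mul_assoc, ← h120,
      Nat.mul_div_cancel_left _ (by norm_num : (0:ℕ) < 120)]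

end
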